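/- The Parikh image of a regular language is semilinear (Parikh's theorem for regular languages): for any regular language R over an alphabet {a₁,...,a_k}, the set Par(R) ⊆ ℕ^k is a finite union of linear sets. -/

import Mathlib

/-- Parikh vector of a word over a `k`-letter alphabet. -/
def Par {k : ℕ} (w : List (Fin k)) : Fin k → ℕ := fun i => w.count i

/-- The linear set with base `b` and periods `ps`. -/
def LinSet {k : ℕ} (b : Fin k → ℕ) (ps : List (Fin k → ℕ)) : Set (Fin k → ℕ) :=
  {v | ∃ lam : Fin ps.length → ℕ, v = b + ∑ i, lam i • ps.get i}

/-- The semilinear set described by a finite list of (base, periods) pairs. -/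
def SemiSet {k : ℕ} (d : List ((Fin k → ℕ) × List (Fin k → ℕ))) : Set (Fin k → ℕ) :=
  {v | ∃ p ∈ d, v ∈ LinSet p.1 p.2}

/-- A set is semilinear if it is a finite union of linear sets. -/
def IsSemilinear {k : ℕ} (S : Set (Fin k → ℕ)) : Prop := ∃ d, S = SemiSet d



variable {k : ℕ}

lemma linset_self (b : Fin k → ℕ) (ps : List (Fin k → ℕ)) : b ∈ LinSet b ps :=
  ⟨0, by simp⟩

lemma linset_add_mem {b x v : Fin k → ℕ} {ps : List (Fin k → ℕ)}
    (hv : v ∈ LinSet b ps) (hx : x ∈ ps) : v + x ∈ LinSet b ps := by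
  obtain ⟨lam, rfl⟩ := hv
  obtain ⟨j, rfl⟩ := List.mem_iff_get.mp hx
  refine ⟨fun i => lam i + (if i = j then 1 else 0), ?_⟩
  have : ∑ i, (lam i + (if i = j then 1 else 0)) • ps.get i
      = (∑ i, lam i • ps.get i) + ∑ i, (if i = j then 1 else 0) • ps.get i := by
    simp [add_smul, Finset.sum_add_distrib]
  rw [this]
  have h2 : ∑ i, (if i = j then 1 else 0 : ℕ) • ps.get i = ps.get j := by
    rw [Finset.sum_eq_single j]
    · simp
    · intro i _ hij; simp [hij]
    · simp
  rw [h2, add_assoc]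

lemma mem_linset {b : Fin k → ℕ} {ps : List (Fin k → ℕ)} {v : Fin k → ℕ} :
    v ∈ LinSet b ps ↔ ∃ c : List (Fin k → ℕ), (∀ x ∈ c, x ∈ ps) ∧ v = b + c.sum := by
  constructor
  · rintro ⟨lam, rfl⟩
    refine ⟨(List.finRange ps.length).flatMap fun i => List.replicate (lam i) (ps.get i),
      ?_, ?_⟩
    · intro x hx
      simp only [List.mem_flatMap, List.mem_replicate] at hx
      obtain ⟨i, _, _, rfl⟩ := hx
      exact ps.get_mem i
    · congr 1
      rw [List.flatMap, List.sum_flatten, List.map_map, Fin.sum_univ_def]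
      congr 1
      ext i
      simp [List.sum_replicate]
  · rintro ⟨c, hc, rfl⟩
    have : ∀ c : List (Fin k → ℕ), (∀ x ∈ c, x ∈ ps) → ∀ v ∈ LinSet b ps,
        v + c.sum ∈ LinSet b ps := by
      intro c
      induction c with
      | nil => intro _ v hv; simpa using hv
      | cons x c ih =>
        intro h v hv
        have : v + (x :: c).sum = (v + x) + c.sum := by
          simp [add_assoc]
        rw [this]
        exact ih (fun y hy => h y (List.mem_cons_of_mem _ hy))
          _ (linset_add_mem hv (h x (List.mem_cons_self)))
    exact this c hc b (linset_self b ps)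

open Pointwise

lemma semiset_append (d1 d2 : List ((Fin k → ℕ) × List (Fin k → ℕ))) :
    SemiSet (d1 ++ d2) = SemiSet d1 ∪ SemiSet d2 := by
  ext v
  simp only [SemiSet, Set.mem_setOf_eq, Set.mem_union, List.mem_append]
  constructor
  · rintro ⟨p, (h | h), hv⟩
    exacts [Or.inl ⟨p, h, hv⟩, Or.inr ⟨p, h, hv⟩]
  · rintro (⟨p, h, hv⟩ | ⟨p, h, hv⟩)
    exacts [⟨p, Or.inl h, hv⟩, ⟨p, Or.inr h, hv⟩]

lemma IsSemilinear.union {S T : Set (Fin k → ℕ)} (hS : IsSemilinear S)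
    (hT : IsSemilinear T) : IsSemilinear (S ∪ T) := by
  obtain ⟨d1, rfl⟩ := hS; obtain ⟨d2, rfl⟩ := hT
  exact ⟨d1 ++ d2, (semiset_append d1 d2).symm⟩

lemma isSemilinear_empty : IsSemilinear (∅ : Set (Fin k → ℕ)) := by
  refine ⟨[], ?_⟩
  ext v; simp [SemiSet]

lemma isSemilinear_of_finite {S : Set (Fin k → ℕ)} (h : S.Finite) : IsSemilinear S := by
  refine ⟨h.toFinset.toList.map (fun v => (v, [])), ?_⟩
  ext v
  simp only [SemiSet, Set.mem_setOf_eq, List.mem_map]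
  constructor
  · intro hv
    exact ⟨(v, []), ⟨v, by simpa using hv, rfl⟩, ⟨0, by simp⟩⟩
  · rintro ⟨p, ⟨w, hw, rfl⟩, lam, hv⟩
    simp only at hv
    have : v = w := by rw [hv]; simp
    subst this
    simpa using hw

lemma linset_add (b1 b2 : Fin k → ℕ) (ps1 ps2 : List (Fin k → ℕ)) :
    LinSet b1 ps1 + LinSet b2 ps2 = LinSet (b1 + b2) (ps1 ++ ps2) := by
  ext v
  rw [Set.mem_add]
  constructor
  · rintro ⟨x, hx, y, hy, rfl⟩
    obtain ⟨c1, hc1, rfl⟩ := mem_linset.mp hx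
    obtain ⟨c2, hc2, rfl⟩ := mem_linset.mp hy
    refine mem_linset.mpr ⟨c1 ++ c2, ?_, ?_⟩
    · intro x hx
      rcases List.mem_append.mp hx with h | h
      exacts [List.mem_append.mpr (Or.inl (hc1 x h)), List.mem_append.mpr (Or.inr (hc2 x h))]
    · rw [List.sum_append]; abel
  · intro hv
    obtain ⟨c, hc, rfl⟩ := mem_linset.mp hv
    have key : ∀ c : List (Fin k → ℕ), (∀ x ∈ c, x ∈ ps1 ++ ps2) →
        ∃ u ∈ LinSet b1 ps1, ∃ w ∈ LinSet b2 ps2, u + w = (b1 + b2) + c.sum := by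
      intro c
      induction c with
      | nil => exact fun _ => ⟨b1, linset_self _ _, b2, linset_self _ _, by simp⟩
      | cons x c ih =>
        intro h
        obtain ⟨u, hu, w, hw, huw⟩ := ih (fun y hy => h y (List.mem_cons_of_mem _ hy))
        rcases List.mem_append.mp (h x (List.mem_cons_self)) with hx | hx
        · exact ⟨u + x, linset_add_mem hu hx, w, hw, by
            rw [List.sum_cons]
            rw [show u + x + w = (u + w) + x by abel, huw]; abel⟩
        · exact ⟨u, hu, w + x, linset_add_mem hw hx, by
            rw [List.sum_cons]
            rw [show u + (w + x) = (u + w) + x by abel, huw]; abel⟩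
    exact key c hc


lemma IsSemilinear.add {S T : Set (Fin k → ℕ)} (hS : IsSemilinear S)
    (hT : IsSemilinear T) : IsSemilinear (S + T) := by
  obtain ⟨d1, rfl⟩ := hS; obtain ⟨d2, rfl⟩ := hT
  refine ⟨d1.flatMap fun p1 => d2.map fun p2 => (p1.1 + p2.1, p1.2 ++ p2.2), ?_⟩
  ext v
  rw [Set.mem_add]
  simp only [SemiSet, Set.mem_setOf_eq, List.mem_flatMap, List.mem_map]
  constructor
  · rintro ⟨x, ⟨p1, hp1, hx⟩, y, ⟨p2, hp2, hy⟩, rfl⟩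
    refine ⟨(p1.1 + p2.1, p1.2 ++ p2.2), ⟨p1, hp1, p2, hp2, rfl⟩, ?_⟩
    rw [← linset_add]
    exact Set.add_mem_add hx hy
  · rintro ⟨p, ⟨p1, hp1, p2, hp2, rfl⟩, hv⟩
    rw [← linset_add] at hv
    obtain ⟨x, hx, y, hy, rfl⟩ := Set.mem_add.mp hv
    exact ⟨x, ⟨p1, hp1, hx⟩, y, ⟨p2, hp2, hy⟩, rfl⟩

/-- Additive star (closure under finite sums) of a set of vectors. -/
def StarSet (S : Set (Fin k → ℕ)) : Set (Fin k → ℕ) :=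
  {v | ∃ c : List (Fin k → ℕ), (∀ x ∈ c, x ∈ S) ∧ v = c.sum}

lemma zero_mem_starSet (S : Set (Fin k → ℕ)) : 0 ∈ StarSet S :=
  ⟨[], by simp, by simp⟩

lemma starSet_add_mem {S : Set (Fin k → ℕ)} {v x : Fin k → ℕ}
    (hv : v ∈ StarSet S) (hx : x ∈ S) : v + x ∈ StarSet S := by
  obtain ⟨c, hc, rfl⟩ := hv
  refine ⟨x :: c, ?_, by rw [List.sum_cons]; abel⟩
  intro y hy
  rcases List.mem_cons.mp hy with rfl | hy
  exacts [hx, hc y hy]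

lemma starSet_union (S T : Set (Fin k → ℕ)) :
    StarSet (S ∪ T) = StarSet S + StarSet T := by
  ext v
  rw [Set.mem_add]
  constructor
  · rintro ⟨c, hc, rfl⟩
    induction c with
    | nil => exact ⟨0, zero_mem_starSet S, 0, zero_mem_starSet T, by simp⟩
    | cons x c ih =>
      obtain ⟨u, hu, w, hw, huw⟩ := ih (fun y hy => hc y (List.mem_cons_of_mem _ hy))
      rcases hc x (List.mem_cons_self) with hx | hx
      · exact ⟨u + x, starSet_add_mem hu hx, w, hw, by
          rw [List.sum_cons, show u + x + w = (u + w) + x by abel, huw]; abel⟩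
      · exact ⟨u, hu, w + x, starSet_add_mem hw hx, by
          rw [List.sum_cons, show u + (w + x) = (u + w) + x by abel, huw]; abel⟩
  · rintro ⟨u, ⟨c1, hc1, rfl⟩, w, ⟨c2, hc2, rfl⟩, rfl⟩
    refine ⟨c1 ++ c2, ?_, by rw [List.sum_append]⟩
    intro y hy
    rcases List.mem_append.mp hy with h | h
    exacts [Or.inl (hc1 y h), Or.inr (hc2 y h)]

lemma starSet_linset (b : Fin k → ℕ) (ps : List (Fin k → ℕ)) :
    StarSet (LinSet b ps) = SemiSet [(0, []), (b, b :: ps)] := by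
  have hmem : ∀ v, v ∈ SemiSet [(0, []), (b, b :: ps)] ↔
      v = 0 ∨ v ∈ LinSet b (b :: ps) := by
    intro v
    simp only [SemiSet, Set.mem_setOf_eq, List.mem_cons, List.mem_singleton]
    constructor
    · rintro ⟨p, (rfl | (rfl | h)), hv⟩
      · left
        obtain ⟨lam, rfl⟩ := hv
        simp
      · exact Or.inr hv
      · exact absurd h List.not_mem_nil
    · rintro (rfl | hv)
      exacts [⟨(0, []), Or.inl rfl, ⟨0, by simp⟩⟩, ⟨(b, b :: ps), Or.inr (Or.inl rfl), hv⟩]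
  ext v
  rw [hmem]
  constructor
  · rintro ⟨c, hc, rfl⟩
    induction c with
    | nil => exact Or.inl (by simp)
    | cons x c ih =>
      have hx := hc x (List.mem_cons_self)
      obtain ⟨cx, hcx, hxeq⟩ := mem_linset.mp hx
      rcases ih (fun y hy => hc y (List.mem_cons_of_mem _ hy)) with h0 | hlin
      · right
        rw [List.sum_cons, h0, add_zero, hxeq]
        exact mem_linset.mpr ⟨cx, fun y hy => List.mem_cons_of_mem _ (hcx y hy), rfl⟩
      · right
        obtain ⟨cy, hcy, hyeq⟩ := mem_linset.mp hlin
        refine mem_linset.mpr ⟨cx ++ (b :: cy), ?_, ?_⟩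
        · intro y hy
          rcases List.mem_append.mp hy with h | h
          · exact List.mem_cons_of_mem _ (hcx y h)
          · rcases List.mem_cons.mp h with rfl | h
            exacts [List.mem_cons_self, hcy y h]
        · rw [List.sum_cons, hxeq, hyeq, List.sum_append, List.sum_cons]
          abel
  · rintro (rfl | hv)
    · exact zero_mem_starSet _
    · -- show every element of LinSet b (b :: ps) is a sum of a nonempty list from LinSet b ps
      obtain ⟨c, hc, rfl⟩ := mem_linset.mp hv
      have key : ∀ c : List (Fin k → ℕ), (∀ x ∈ c, x ∈ b :: ps) →
          ∃ l : List (Fin k → ℕ), l ≠ [] ∧ (∀ x ∈ l, x ∈ LinSet b ps) ∧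
            l.sum = b + c.sum := by
        intro c
        induction c with
        | nil =>
          intro _
          refine ⟨[b], by simp, ?_, by simp⟩
          intro x hx
          rw [List.mem_singleton] at hx
          rw [hx]
          exact linset_self b ps
        | cons x c ih =>
          intro h
          obtain ⟨l, hne, hl, hsum⟩ := ih (fun y hy => h y (List.mem_cons_of_mem _ hy))
          rcases List.mem_cons.mp (h x (List.mem_cons_self)) with hxb | hx
          · refine ⟨x :: l, by simp, ?_, ?_⟩
            · intro y hy
              rcases List.mem_cons.mp hy with hyx | hy
              · rw [hyx, hxb]; exact linset_self b ps
              · exact hl y hy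
            · rw [List.sum_cons, hsum, List.sum_cons, hxb]
          · obtain ⟨hd, tl, rfl⟩ := List.exists_cons_of_ne_nil hne
            refine ⟨(hd + x) :: tl, by simp, ?_, ?_⟩
            · intro y hy
              rcases List.mem_cons.mp hy with rfl | hy
              exacts [linset_add_mem (hl hd (List.mem_cons_self)) hx,
                hl y (List.mem_cons_of_mem _ hy)]
            · rw [List.sum_cons, List.sum_cons] at *
              rw [show hd + x + tl.sum = (hd + tl.sum) + x by abel, hsum]
              abel
      obtain ⟨l, _, hl, hsum⟩ := key c hc
      exact ⟨l, hl, hsum.symm⟩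

lemma IsSemilinear.starSet {S : Set (Fin k → ℕ)} (hS : IsSemilinear S) :
    IsSemilinear (StarSet S) := by
  obtain ⟨d, rfl⟩ := hS
  induction d with
  | nil =>
    have : StarSet (SemiSet ([] : List ((Fin k → ℕ) × List (Fin k → ℕ)))) = {0} := by
      ext v
      constructor
      · rintro ⟨c, hc, rfl⟩
        have : c = [] := by
          cases c with
          | nil => rfl
          | cons x c => exact absurd (hc x (List.mem_cons_self)) (by simp [SemiSet])
        simp [this]
      · rintro rfl; exact zero_mem_starSet _
    rw [this]
    exact isSemilinear_of_finite (Set.finite_singleton 0)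
  | cons p d ih =>
    have hsplit : SemiSet (p :: d) = LinSet p.1 p.2 ∪ SemiSet d := by
      ext v
      simp only [SemiSet, Set.mem_setOf_eq, List.mem_cons, Set.mem_union]
      constructor
      · rintro ⟨q, (rfl | hq), hv⟩
        exacts [Or.inl hv, Or.inr ⟨q, hq, hv⟩]
      · rintro (hv | ⟨q, hq, hv⟩)
        exacts [⟨p, Or.inl rfl, hv⟩, ⟨q, Or.inr hq, hv⟩]
    rw [hsplit, starSet_union]
    exact IsSemilinear.add ⟨_, starSet_linset p.1 p.2⟩ ih
open Computability


lemma isSemilinear_list_iUnion {ι : Type*} (l : List ι) (f : ι → Set (Fin k → ℕ))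
    (hf : ∀ i, IsSemilinear (f i)) : IsSemilinear (⋃ i ∈ l, f i) := by
  induction l with
  | nil => simpa using isSemilinear_empty
  | cons a l ih =>
    have : (⋃ i ∈ a :: l, f i) = f a ∪ ⋃ i ∈ l, f i := by
      simp [Set.iUnion_or, Set.iUnion_union_distrib]
    rw [this]
    exact (hf a).union ih

lemma par_nil : Par ([] : List (Fin k)) = 0 := by
  funext i; simp [Par]

lemma par_append (u v : List (Fin k)) : Par (u ++ v) = Par u + Par v := by
  funext i; simp [Par, List.count_append]

lemma par_image_union (L1 L2 : Language (Fin k)) :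
    Par '' (L1 + L2 : Language (Fin k)) = Par '' L1 ∪ Par '' L2 :=
  Set.image_union _ _ _

lemma par_image_mul (L1 L2 : Language (Fin k)) :
    Par '' (L1 * L2) = Par '' L1 + Par '' L2 := by
  ext v
  rw [Set.mem_add]
  constructor
  · rintro ⟨w, hw, rfl⟩
    obtain ⟨a, ha, b, hb, rfl⟩ := Language.mem_mul.mp hw
    exact ⟨Par a, ⟨a, ha, rfl⟩, Par b, ⟨b, hb, rfl⟩, (par_append a b).symm⟩
  · rintro ⟨x, ⟨a, ha, rfl⟩, y, ⟨b, hb, rfl⟩, rfl⟩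
    exact ⟨a ++ b, Language.mem_mul.mpr ⟨a, ha, b, hb, rfl⟩, par_append a b⟩

lemma par_flatten (L : List (List (Fin k))) : Par L.flatten = (L.map Par).sum := by
  induction L with
  | nil => simpa using par_nil
  | cons x L ih => simp [par_append, ih]

lemma par_image_kstar (L : Language (Fin k)) :
    Par '' ((L∗ : Language (Fin k)) : Set (List (Fin k))) = StarSet (Par '' L) := by
  ext v
  constructor
  · rintro ⟨w, hw, rfl⟩
    obtain ⟨Lw, rfl, hLw⟩ := Language.mem_kstar.mp hw
    refine ⟨Lw.map Par, ?_, par_flatten Lw⟩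
    intro x hx
    obtain ⟨y, hy, rfl⟩ := List.mem_map.mp hx
    exact ⟨y, hLw y hy, rfl⟩
  · rintro ⟨c, hc, rfl⟩
    have key : ∀ c : List (Fin k → ℕ), (∀ x ∈ c, x ∈ Par '' L) →
        ∃ w ∈ L∗, Par w = c.sum := by
      intro c
      induction c with
      | nil => exact fun _ => ⟨[], Language.nil_mem_kstar L, by simpa using par_nil⟩
      | cons x c ih =>
        intro h
        obtain ⟨w, hw, hwp⟩ := ih (fun y hy => h y (List.mem_cons_of_mem _ hy))
        obtain ⟨u, hu, hup⟩ := h x (List.mem_cons_self)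
        obtain ⟨Lw, rfl, hLw⟩ := Language.mem_kstar.mp hw
        refine ⟨u ++ Lw.flatten, ?_, ?_⟩
        · have : u ++ Lw.flatten = (u :: Lw).flatten := rfl
          rw [this]
          refine Language.join_mem_kstar ?_
          intro y hy
          rcases List.mem_cons.mp hy with rfl | hy
          exacts [hu, hLw y hy]
        · rw [par_append, hup, hwp, List.sum_cons]
    obtain ⟨w, hw, hwp⟩ := key c hc
    exact ⟨w, hw, hwp⟩

section DFAPart

variable {σ : Type} (M : DFA (Fin k) σ)

/-- Words taking `p` to `q` with all strictly-intermediate states inside `F`. -/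
def Restr (F : Set σ) (p q : σ) : Language (Fin k) :=
  {w | M.evalFrom p w = q ∧ ∀ i, 0 < i → i < w.length → M.evalFrom p (w.take i) ∈ F}

lemma restr_mono {F G : Set σ} (h : F ⊆ G) {p q : σ} :
    ∀ w ∈ Restr M F p q, w ∈ Restr M G p q := by
  rintro w ⟨e, hi⟩
  exact ⟨e, fun j h1 h2 => h (hi j h1 h2)⟩

lemma restr_append {F G H : Set σ} {p r q : σ} {w1 w2 : List (Fin k)}
    (h1 : w1 ∈ Restr M F p r) (h2 : w2 ∈ Restr M G r q)
    (hF : F ⊆ H) (hG : G ⊆ H) (hr : r ∈ H) : w1 ++ w2 ∈ Restr M H p q := by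
  obtain ⟨e1, i1⟩ := h1
  obtain ⟨e2, i2⟩ := h2
  constructor
  · rw [DFA.evalFrom_of_append, e1, e2]
  · intro i hi0 hilen
    rcases lt_or_ge i w1.length with h | h
    · have ht : (w1 ++ w2).take i = w1.take i := by
        rw [List.take_append, Nat.sub_eq_zero_of_le h.le]
        simp
      rw [ht]
      exact hF (i1 i hi0 h)
    · have ht : (w1 ++ w2).take i = w1 ++ w2.take (i - w1.length) := by
        rw [List.take_append, List.take_of_length_le h]
      rw [ht, DFA.evalFrom_of_append, e1]
      by_cases h0 : i - w1.length = 0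
      · rw [h0]
        simpa using hr
      · have hlt : i - w1.length < w2.length := by
          rw [List.length_append] at hilen; omega
        exact hG (i2 _ (Nat.pos_of_ne_zero h0) hlt)

lemma restr_star {F : Set σ} {r : σ} {w : List (Fin k)}
    (hw : w ∈ ((Restr M F r r)∗ : Language (Fin k))) :
    w ∈ Restr M (insert r F) r r := by
  obtain ⟨L, rfl, hL⟩ := Language.mem_kstar.mp hw
  have key : ∀ L : List (List (Fin k)), (∀ y ∈ L, y ∈ Restr M F r r) →
      L.flatten ∈ Restr M (insert r F) r r := by
    intro L
    induction L with
    | nil =>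
      intro _
      refine ⟨rfl, ?_⟩
      intro i h1 h2
      simp at h2
    | cons x L ih =>
      intro h
      have hflat : (x :: L).flatten = x ++ L.flatten := rfl
      rw [hflat]
      exact restr_append M (h x (List.mem_cons_self))
        (ih (fun y hy => h y (List.mem_cons_of_mem _ hy)))
        (Set.subset_insert r F) (fun a ha => ha) (Set.mem_insert r F)
  exact key L hL

lemma restr_split {F : Set σ} {r q : σ} :
    ∀ (n : ℕ) (w : List (Fin k)) (p : σ), w.length ≤ n →
      w ∈ Restr M (insert r F) p q →
      w ∈ Restr M F p q ∨
        w ∈ (Restr M F p r * (Restr M F r r)∗ * Restr M F r q : Language (Fin k)) := by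
  intro n
  induction n with
  | zero =>
    intro w p hlen hw
    obtain ⟨e, _⟩ := hw
    left
    exact ⟨e, fun i h1 h2 => absurd h2 (by omega)⟩
  | succ n ih =>
    intro w p hlen hw
    obtain ⟨e, inter⟩ := hw
    by_cases hall : ∀ i, 0 < i → i < w.length → M.evalFrom p (w.take i) ∈ F
    · exact Or.inl ⟨e, hall⟩
    · right
      push_neg at hall
      have hex : ∃ i, 0 < i ∧ i < w.length ∧ M.evalFrom p (w.take i) = r := by
        obtain ⟨i, h1, h2, h3⟩ := hall
        refine ⟨i, h1, h2, ?_⟩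
        rcases (Set.mem_insert_iff.mp (inter i h1 h2)) with heq | hF
        exacts [heq, absurd hF h3]
      classical
      obtain ⟨hi0pos, hi0len, hi0r⟩ := Nat.find_spec hex
      set i0 := Nat.find hex with hi0def
      set u := w.take i0 with hudef
      set v := w.drop i0 with hvdef
      have hw_eq : w = u ++ v := (List.take_append_drop i0 w).symm
      have hulen : u.length = i0 := by
        rw [hudef, List.length_take]; omega
      have hu : u ∈ Restr M F p r := by
        refine ⟨hi0r, ?_⟩
        intro j hj0 hjlen
        rw [hulen] at hjlen
        have ht : u.take j = w.take j := by
          rw [hudef, List.take_take, min_eq_left hjlen.le]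
        rw [ht]
        have hjw : j < w.length := lt_trans hjlen hi0len
        rcases Set.mem_insert_iff.mp (inter j hj0 hjw) with heq | hF
        · exact absurd ⟨hj0, hjw, heq⟩ (Nat.find_min hex hjlen)
        · exact hF
      have hvr : M.evalFrom r v = q := by
        have : M.evalFrom p w = M.evalFrom (M.evalFrom p u) v := by
          rw [hw_eq, DFA.evalFrom_of_append]
        rw [e, hi0r] at this
        exact this.symm
      have hv : v ∈ Restr M (insert r F) r q := by
        refine ⟨hvr, ?_⟩
        intro j hj0 hjlen
        have ht : w.take (i0 + j) = u ++ v.take j := List.take_add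
        have heval : M.evalFrom r (v.take j) = M.evalFrom p (w.take (i0 + j)) := by
          rw [ht, DFA.evalFrom_of_append, hi0r]
        rw [heval]
        have hvlen' : v.length = w.length - i0 := by rw [hvdef, List.length_drop]
        exact inter (i0 + j) (by omega) (by omega)
      have hvlen : v.length ≤ n := by
        have : v.length = w.length - i0 := by rw [hvdef, List.length_drop]
        omega
      rcases ih v r hvlen hv with hcase | hcase
      · refine Language.mem_mul.mpr ⟨u ++ [], ?_, v, hcase, ?_⟩
        · exact Language.mem_mul.mpr ⟨u, hu, [], Language.nil_mem_kstar _, rfl⟩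
        · rw [List.append_nil]; exact hw_eq.symm
      · obtain ⟨x, hx, d, hd, hvd⟩ := Language.mem_mul.mp hcase
        obtain ⟨a, ha, s, hs, hxs⟩ := Language.mem_mul.mp hx
        have hstar : a ++ s ∈ ((Restr M F r r)∗ : Language (Fin k)) := by
          obtain ⟨Ls, rfl, hLs⟩ := Language.mem_kstar.mp hs
          have : a ++ Ls.flatten = (a :: Ls).flatten := rfl
          rw [this]
          refine Language.join_mem_kstar ?_
          intro y hy
          rcases List.mem_cons.mp hy with rfl | hy
          exacts [ha, hLs y hy]
        refine Language.mem_mul.mpr ⟨u ++ (a ++ s),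
          Language.mem_mul.mpr ⟨u, hu, a ++ s, hstar, rfl⟩, d, hd, ?_⟩
        rw [hw_eq, ← hvd, ← hxs]
        simp [List.append_assoc]

lemma restr_insert_eq (F : Set σ) (r p q : σ) :
    Restr M (insert r F) p q =
      (Restr M F p q + Restr M F p r * (Restr M F r r)∗ * Restr M F r q :
        Language (Fin k)) := by
  ext w
  rw [Language.mem_add]
  constructor
  · intro hw
    exact restr_split M w.length w p le_rfl hw
  · rintro (h | h)
    · exact restr_mono M (Set.subset_insert r F) w h
    · obtain ⟨x, hx, d, hd, rfl⟩ := Language.mem_mul.mp h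
      obtain ⟨a, ha, s, hs, rfl⟩ := Language.mem_mul.mp hx
      have hs' : s ∈ Restr M (insert r F) r r := restr_star M hs
      have has : a ++ s ∈ Restr M (insert r F) p r :=
        restr_append M ha hs' (Set.subset_insert r F) (fun y hy => hy)
          (Set.mem_insert r F)
      exact restr_append M has hd (fun y hy => hy) (Set.subset_insert r F)
        (Set.mem_insert r F)

lemma restr_empty_semilinear (p q : σ) :
    IsSemilinear (Par '' (Restr M (∅ : Set σ) p q : Set (List (Fin k)))) := by
  apply isSemilinear_of_finite
  have hsub : ∀ w ∈ Restr M (∅ : Set σ) p q, w ∈ {w : List (Fin k) | w.length ≤ 1} := by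
    rintro w ⟨_, hi⟩
    by_contra h
    simp only [Set.mem_setOf_eq, not_le] at h
    exact Set.notMem_empty _ (hi 1 one_pos h)
  exact ((List.finite_length_le (Fin k) 1).subset hsub).image Par

lemma restr_semilinear [Fintype σ] (F : Finset σ) (p q : σ) :
    IsSemilinear (Par '' (Restr M (↑F : Set σ) p q : Set (List (Fin k)))) := by
  classical
  induction F using Finset.induction_on generalizing p q with
  | empty => simpa using restr_empty_semilinear M p q
  | insert r F hr ih =>
    rw [Finset.coe_insert, restr_insert_eq]
    have himg : Par '' ((Restr M (↑F) p q +
        Restr M (↑F) p r * (Restr M (↑F) r r)∗ * Restr M (↑F) r q :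
          Language (Fin k)) : Set (List (Fin k)))
        = Par '' (Restr M (↑F) p q : Set (List (Fin k))) ∪
          (Par '' (Restr M (↑F) p r : Set (List (Fin k))) +
            StarSet (Par '' (Restr M (↑F) r r : Set (List (Fin k)))) +
            Par '' (Restr M (↑F) r q : Set (List (Fin k)))) := by
      rw [par_image_union, par_image_mul, par_image_mul, par_image_kstar]
    rw [himg]
    exact (ih p q).union (((ih p r).add (ih r r).starSet).add (ih r q))

end DFAPart


/-- Parikh's theorem for regular languages: the Parikh image of any
regular language over a `k`-letter alphabet is semilinear. -/
theorem parikh_image_of_regular_is_semilinear {k : ℕ} (R : Language (Fin k))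
    (hR : R.IsRegular) : IsSemilinear (Par '' R) := by
  obtain ⟨σ, hfin, M, rfl⟩ := hR
  letI := hfin
  classical
  have heq : (Par '' (M.accepts : Set (List (Fin k)))) =
      ⋃ q ∈ (Finset.univ : Finset σ).toList,
        Par '' {w : List (Fin k) | M.evalFrom M.start w = q ∧ q ∈ M.accept} := by
    ext v
    constructor
    · rintro ⟨w, hw, rfl⟩
      have hw' : M.evalFrom M.start w ∈ M.accept := (DFA.mem_accepts M).mp hw
      exact Set.mem_biUnion (Finset.mem_toList.mpr (Finset.mem_univ _))
        ⟨w, ⟨rfl, hw'⟩, rfl⟩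
    · intro hv
      simp only [Set.mem_iUnion] at hv
      obtain ⟨q, _, w, ⟨hq, hacc⟩, rfl⟩ := hv
      exact ⟨w, (DFA.mem_accepts M).mpr (by
        show M.evalFrom M.start w ∈ M.accept
        rw [hq]; exact hacc), rfl⟩
  rw [heq]
  apply isSemilinear_list_iUnion
  intro q
  by_cases hq : q ∈ M.accept
  · have : {w : List (Fin k) | M.evalFrom M.start w = q ∧ q ∈ M.accept}
        = (Restr M (↑(Finset.univ : Finset σ) : Set σ) M.start q : Set (List (Fin k))) := by
      ext w
      simp [Restr, hq]
    rw [this]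
    exact restr_semilinear M Finset.univ M.start q
  · have : {w : List (Fin k) | M.evalFrom M.start w = q ∧ q ∈ M.accept} = ∅ := by
      ext w; simp [hq]
    rw [this, Set.image_empty]
    exact isSemilinear_empty
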